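/- Let M be a real symmetric n×n matrix. Then for any two indices i, j, the sum of vertex M-energies satisfies ME(v_i) + ME(v_j) ≥ 2·|[M − (tr(M)/n)I]_{ij}|. -/

import Mathlib

open Matrix BigOperators

/-- The absolute value of a real matrix `B`, defined as `(B * Bᵀ)^(1/2)`. -/
noncomputable def matAbs {n : ℕ} (B : Matrix (Fin n) (Fin n) ℝ) : Matrix (Fin n) (Fin n) ℝ :=
  let hA : (B * Bᵀ).PosSemidef := Matrix.conjTranspose_eq_transpose_of_trivial B ▸
    Matrix.posSemidef_self_mul_conjTranspose B
  hA.1.eigenvectorUnitary.1 * diagonal ((↑) ∘ (fun x : ℝ => √x) ∘ hA.1.eigenvalues) *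
    (star hA.1.eigenvectorUnitary : Matrix (Fin n) (Fin n) ℝ)

/-- The M-energy of the `i`-th vertex: `(|M - (tr M / n) • I|)_{ii}`. -/
noncomputable def mEnergy {n : ℕ} (M : Matrix (Fin n) (Fin n) ℝ) (i : Fin n) : ℝ :=
  matAbs (M - (M.trace / n) • 1) i i

private lemma psd_add {n : ℕ} (A : Matrix (Fin n) (Fin n) ℝ) (hA : A.PosSemidef) (i j : Fin n) :
    0 ≤ A i i + A i j + A j i + A j j := by
  have h := hA.dotProduct_mulVec_nonneg (Pi.single i 1 + Pi.single j 1 : Fin n → ℝ)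
  simp [dotProduct, mulVec, Pi.single_apply, mul_add, add_mul, Finset.sum_add_distrib,
    Finset.mul_sum, ite_and] at h
  linarith

private lemma psd_sub {n : ℕ} (A : Matrix (Fin n) (Fin n) ℝ) (hA : A.PosSemidef) (i j : Fin n) :
    0 ≤ A i i - A i j - A j i + A j j := by
  have h := hA.dotProduct_mulVec_nonneg (Pi.single i 1 - Pi.single j 1 : Fin n → ℝ)
  simp [dotProduct, mulVec, Pi.single_apply, mul_sub, sub_mul, mul_add, add_mul,
    Finset.sum_sub_distrib, Finset.mul_sum, ite_and] at h
  linarith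

theorem stmt4 {n : ℕ} (M : Matrix (Fin n) (Fin n) ℝ) (hM : M.IsSymm) (i j : Fin n) :
    mEnergy M i + mEnergy M j ≥ 2 * |(M - (M.trace / n) • 1) i j| := by
  set B : Matrix (Fin n) (Fin n) ℝ := M - (M.trace / n) • 1 with hBdef
  have hBt : Bᵀ = B := by
    rw [hBdef, transpose_sub, transpose_smul, transpose_one, hM]
  have hB : B.IsHermitian := by
    rwa [Matrix.IsHermitian, conjTranspose_eq_transpose_of_trivial]
  set V : Matrix (Fin n) (Fin n) ℝ := (hB.eigenvectorUnitary : Matrix (Fin n) (Fin n) ℝ) with hV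
  set lam := hB.eigenvalues with hlam
  have hspec : B = V * diagonal (RCLike.ofReal ∘ lam) * star V := hB.spectral_theorem
  have hVV : star V * V = 1 := (Matrix.mem_unitaryGroup_iff').mp hB.eigenvectorUnitary.2
  set T : Matrix (Fin n) (Fin n) ℝ := V * diagonal (fun k => |lam k|) * star V with hT
  have hTpsd : T.PosSemidef :=
    (Matrix.posSemidef_diagonal_iff.mpr (fun k => abs_nonneg _)).mul_mul_conjTranspose_same V
  have key : ∀ d d' : Fin n → ℝ, (V * diagonal d * star V) * (V * diagonal d' * star V)
      = V * diagonal (fun k => d k * d' k) * star V := by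
    intro d d'
    calc V * diagonal d * star V * (V * diagonal d' * star V)
        = V * (diagonal d * (star V * V) * diagonal d') * star V := by noncomm_ring
      _ = V * diagonal (fun k => d k * d' k) * star V := by
          rw [hVV, mul_one, diagonal_mul_diagonal]
  have hT2 : T ^ 2 = B * Bᵀ := by
    rw [hBt, ← pow_two, hspec, pow_two, pow_two, hT, key, key]
    congr 1
    congr 1
    ext k
    simp [← sq_abs, pow_two]
  have hST : matAbs B = T := by
    have e1 : matAbs B = cfc Real.sqrt (B * Bᵀ) := by
      rw [Matrix.IsHermitian.cfc_eq (Matrix.conjTranspose_eq_transpose_of_trivial B ▸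
        Matrix.posSemidef_self_mul_conjTranspose B : (B * Bᵀ).PosSemidef).1]
      unfold matAbs
      simp only [IsHermitian.cfc, Unitary.conjStarAlgAut_apply]
      rfl
    have e2 : B * Bᵀ = cfc (fun x : ℝ => x * x) B := by
      rw [hBt, cfc_mul (fun x : ℝ => x) (fun x => x) B, cfc_id' ℝ B]
    rw [e1, e2, ← cfc_comp Real.sqrt (fun x : ℝ => x * x) B, hB.cfc_eq]
    simp only [IsHermitian.cfc, Unitary.conjStarAlgAut_apply, Function.comp_def, Real.sqrt_mul_self_eq_abs]
    rfl
  -- T + B and T - B are positive semidefinite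
  have hdiff : ∀ d d' : Fin n → ℝ, (V * diagonal d * star V) - (V * diagonal d' * star V)
      = V * diagonal (fun k => d k - d' k) * star V := by
    intro d d'
    rw [← sub_mul, ← mul_sub, ← diagonal_sub]
  have hsum : ∀ d d' : Fin n → ℝ, (V * diagonal d * star V) + (V * diagonal d' * star V)
      = V * diagonal (fun k => d k + d' k) * star V := by
    intro d d'
    rw [← add_mul, ← mul_add, ← diagonal_add]
  have hTmB : (T - B).PosSemidef := by
    rw [hT, hspec, hdiff]
    exact (Matrix.posSemidef_diagonal_iff.mpr
      (fun k => by simpa using sub_nonneg.mpr (le_abs_self (lam k)))).mul_mul_conjTranspose_same V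
  have hTpB : (T + B).PosSemidef := by
    rw [hT, hspec, hsum]
    exact (Matrix.posSemidef_diagonal_iff.mpr
      (fun k => by simp [Function.comp]; linarith [neg_abs_le (lam k)])).mul_mul_conjTranspose_same V
  have h1 := psd_add _ hTmB i j
  have h2 := psd_sub _ hTpB i j
  have h3 := psd_add _ hTpB i j
  have h4 := psd_sub _ hTmB i j
  simp only [Matrix.add_apply, Matrix.sub_apply] at h1 h2 h3 h4
  have hsym : B j i = B i j := by
    conv_lhs => rw [← hBt]
    rfl
  show matAbs B i i + matAbs B j j ≥ 2 * |B i j|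
  rw [hST]
  rcases abs_cases (B i j) with ⟨h, _⟩ | ⟨h, _⟩ <;> rw [h] <;> linarith
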